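/- Fix σ² > 0, R1, R2 > 0 and a, b > 0, and set P1 = a·t, P2 = b·t. Then as t → ∞, t²·P_out,2 → ( 2^{R1+R2}·R1·ln 2 − (2^{R1} − 1) )·σ⁴/(a·b); equivalently P_out,2 ≃ ( 2^{R1+R2}·R1·ln 2 − (2^{R1}−1) )·σ⁴/(P1·P2) in the high-SNR limit. -/

import Mathlib

open MeasureTheory ProbabilityTheory Real Filter

open Set
open scoped ENNReal

/-- The XP-HARQ outage probability after 2 rounds,
`P_out,2 = Pr(I₁ < R₁ ∧ I₁ + I₂ < R₁ + R₂)` with `I_k = log₂(1 + γ_k)`, where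
`γ₁, γ₂` are independent exponential random variables with rates `σ²/P₁, σ²/P₂`,
realized canonically on `ℝ × ℝ` with the product of exponential measures. -/
noncomputable def poutTwo (σ2 P1 P2 R1 R2 : ℝ) : ℝ :=
  (((expMeasure (σ2 / P1)).prod (expMeasure (σ2 / P2)))
    {p : ℝ × ℝ | Real.logb 2 (1 + p.1) < R1 ∧
      Real.logb 2 (1 + p.1) + Real.logb 2 (1 + p.2) < R1 + R2}).toReal


-- abbreviations
noncomputable def oSet (R1 R2 : ℝ) : Set (ℝ × ℝ) :=
  {p : ℝ × ℝ | Real.logb 2 (1 + p.1) < R1 ∧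
      Real.logb 2 (1 + p.1) + Real.logb 2 (1 + p.2) < R1 + R2}

lemma oSet_meas : MeasurableSet (oSet R1 R2) := by
  apply MeasurableSet.inter
  · exact measurableSet_lt ((Real.measurable_log.comp
      (measurable_const.add measurable_fst)).div_const _) measurable_const
  · exact measurableSet_lt (((Real.measurable_log.comp
      (measurable_const.add measurable_fst)).div_const _).add ((Real.measurable_log.comp
      (measurable_const.add measurable_snd)).div_const _)) measurable_const

lemma slice_empty (hR1 : 0 < R1) {x : ℝ} (hx : (2:ℝ)^R1 - 1 ≤ x) :
    Prod.mk x ⁻¹' (oSet R1 R2) = ∅ := by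
  ext y
  simp only [oSet, mem_preimage, mem_setOf_eq, mem_empty_iff_false, iff_false, not_and]
  intro h
  exfalso
  have h2 : (2:ℝ)^R1 ≤ 1 + x := by linarith
  have hpos : (0:ℝ) < 1 + x := lt_of_lt_of_le (Real.rpow_pos_of_pos two_pos R1) h2
  have := (Real.le_logb_iff_rpow_le one_lt_two hpos).2 h2
  linarith

lemma slice_inter (hR1 : 0 < R1) (hR2 : 0 < R2) {x : ℝ}
    (hx : x ∈ Ico 0 ((2:ℝ)^R1 - 1)) :
    Prod.mk x ⁻¹' (oSet R1 R2) ∩ Ici 0 = Ico 0 ((2:ℝ)^(R1+R2)/(1+x) - 1) := by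
  have hx1 : (0:ℝ) < 1 + x := by linarith [hx.1]
  have hc1 : Real.logb 2 (1 + x) < R1 :=
    (Real.logb_lt_iff_lt_rpow one_lt_two hx1).2 (by linarith [hx.2])
  have hz : (2:ℝ)^(R1 + R2 - Real.logb 2 (1+x)) = (2:ℝ)^(R1+R2)/(1+x) := by
    rw [Real.rpow_sub two_pos, Real.rpow_logb two_pos (by norm_num) hx1]
  ext y
  simp only [oSet, mem_inter_iff, mem_preimage, mem_setOf_eq, mem_Ici, mem_Ico]
  constructor
  · rintro ⟨⟨-, h2⟩, hy0⟩
    refine ⟨hy0, ?_⟩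
    have hy1 : (0:ℝ) < 1 + y := by linarith
    have h3 : Real.logb 2 (1+y) < R1 + R2 - Real.logb 2 (1+x) := by linarith
    have := (Real.logb_lt_iff_lt_rpow one_lt_two hy1).1 h3
    rw [hz] at this
    linarith
  · rintro ⟨hy0, hyz⟩
    have hy1 : (0:ℝ) < 1 + y := by linarith
    refine ⟨⟨hc1, ?_⟩, hy0⟩
    have : 1 + y < (2:ℝ)^(R1 + R2 - Real.logb 2 (1+x)) := by rw [hz]; linarith
    have := (Real.logb_lt_iff_lt_rpow one_lt_two hy1).2 this
    linarith


lemma expMeasure_apply (r : ℝ) {s : Set ℝ} (hs : MeasurableSet s) :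
    expMeasure r s = ∫⁻ x in s, exponentialPDF r x := by
  rw [expMeasure, gammaMeasure, withDensity_apply _ hs]; rfl

lemma expMeasure_Iio_zero (r : ℝ) : expMeasure r (Iio 0) = 0 := by
  rw [expMeasure_apply r measurableSet_Iio]
  exact lintegral_exponentialPDF_of_nonpos le_rfl

lemma expMeasure_eq_inter_Ici (r : ℝ) {s : Set ℝ} (hs : MeasurableSet s) :
    expMeasure r s = expMeasure r (s ∩ Ici 0) := by
  refine le_antisymm ?_ (measure_mono inter_subset_left)
  calc expMeasure r s ≤ expMeasure r (s ∩ Ici 0) + expMeasure r (s \ Ici 0) :=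
        measure_le_inter_add_diff _ _ _
    _ = expMeasure r (s ∩ Ici 0) := by
        have : expMeasure r (s \ Ici 0) = 0 :=
          measure_mono_null (fun x hx => by simpa using not_le.1 hx.2) (expMeasure_Iio_zero r)
        rw [this, add_zero]

lemma expMeasure_Ico_le {r z : ℝ} (hr : 0 < r) (hz : 0 ≤ z) :
    expMeasure r (Ico 0 z) ≤ ENNReal.ofReal (r * z) := by
  rw [expMeasure_apply r measurableSet_Ico]
  calc ∫⁻ x in Ico 0 z, exponentialPDF r x ≤ ∫⁻ _ in Ico 0 z, ENNReal.ofReal r := by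
        refine setLIntegral_mono measurable_const fun x hx => ?_
        rw [exponentialPDF_of_nonneg hx.1]
        exact ENNReal.ofReal_le_ofReal (by
          nlinarith [Real.exp_le_one_iff.2 (by nlinarith [hx.1] : -(r*x) ≤ 0), Real.exp_pos (-(r*x))])
    _ = ENNReal.ofReal r * volume (Ico 0 z) := setLIntegral_const _ _
    _ = ENNReal.ofReal (r * z) := by
        rw [Real.volume_Ico, ← ENNReal.ofReal_mul hr.le]; norm_num

lemma le_expMeasure_Ico {r z c : ℝ} (hr : 0 < r) (hz : 0 ≤ z) (hc0 : 0 ≤ c) (hc : c ≤ 1 - r * z) :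
    ENNReal.ofReal (r * c * z) ≤ expMeasure r (Ico 0 z) := by
  rw [expMeasure_apply r measurableSet_Ico]
  calc ENNReal.ofReal (r * c * z) = ENNReal.ofReal (r * c) * volume (Ico 0 z) := by
        rw [Real.volume_Ico, ← ENNReal.ofReal_mul (by positivity)]; norm_num
    _ ≤ ∫⁻ x in Ico 0 z, exponentialPDF r x := by
        rw [← setLIntegral_const]
        refine setLIntegral_mono ((measurable_exponentialPDFReal r).ennreal_ofReal) fun x hx => ?_
        rw [exponentialPDF_of_nonneg hx.1]
        refine ENNReal.ofReal_le_ofReal ?_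
        have h1 : -(r*x) + 1 ≤ Real.exp (-(r*x)) := Real.add_one_le_exp _
        have : c ≤ Real.exp (-(r*x)) := by nlinarith [hr.le, hx.1, hx.2.le]
        nlinarith

lemma lint_ofReal {m : ℝ} (hm0 : 0 < m) (φ : ℝ → ℝ) (hφc : ContinuousOn φ (Icc 0 m))
    (hφ0 : ∀ x ∈ Ico 0 m, 0 ≤ φ x) :
    ∫⁻ x in Ico 0 m, ENNReal.ofReal (φ x) = ENNReal.ofReal (∫ x in (0:ℝ)..m, φ x) := by
  rw [← ofReal_integral_eq_lintegral_ofReal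
    ((hφc.integrableOn_Icc).mono_set Ico_subset_Icc_self)
    ((ae_restrict_iff' measurableSet_Ico).2 (ae_of_all _ hφ0))]
  congr 1
  rw [intervalIntegral.integral_of_le hm0.le, integral_Ico_eq_integral_Ioo,
    integral_Ioc_eq_integral_Ioo]

lemma intG (R1 R2 : ℝ) (hR1 : 0 < R1) :
    ∫ x in (0:ℝ)..((2:ℝ)^R1 - 1), ((2:ℝ)^(R1+R2)/(1+x) - 1)
      = (2:ℝ)^(R1+R2) * (R1 * Real.log 2) - ((2:ℝ)^R1 - 1) := by
  set m := (2:ℝ)^R1 - 1 with hm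
  set T := (2:ℝ)^(R1+R2) with hT
  have hm0 : 0 < m := by
    have : (1:ℝ) < (2:ℝ)^R1 := Real.one_lt_rpow_iff_of_pos two_pos |>.2 (Or.inl ⟨one_lt_two, hR1⟩)
    simp [hm]; linarith
  have hcont : ContinuousOn (fun x : ℝ => 1 + x) (Icc 0 m) := by fun_prop
  have hne : ∀ x ∈ uIcc (0:ℝ) m, 1 + x ≠ 0 := by
    intro x hx
    rw [uIcc_of_le hm0.le] at hx
    have := hx.1; intro h; linarith
  have hint1 : IntervalIntegrable (fun x : ℝ => (1+x)⁻¹) volume 0 m := by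
    apply ContinuousOn.intervalIntegrable
    exact ContinuousOn.inv₀ (by fun_prop) hne
  have hinv : ∫ x in (0:ℝ)..m, (1+x)⁻¹ = R1 * Real.log 2 := by
    have h1 : ∫ x in (0:ℝ)..m, (x+1)⁻¹ = ∫ x in (0+1:ℝ)..(m+1), x⁻¹ :=
      intervalIntegral.integral_comp_add_right (fun y => y⁻¹) 1
    have h2 : ∫ x in (0+1:ℝ)..(m+1), x⁻¹ = Real.log ((m+1)/(0+1)) := by
      apply integral_inv
      rw [uIcc_of_le (by linarith)]
      intro h; have := h.1; linarith
    have h3 : Real.log ((m+1)/(0+1)) = R1 * Real.log 2 := by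
      have : m + 1 = (2:ℝ)^R1 := by simp [hm]
      rw [this]; norm_num; rw [Real.log_rpow two_pos]
    calc ∫ x in (0:ℝ)..m, (1+x)⁻¹ = ∫ x in (0:ℝ)..m, (x+1)⁻¹ := by
          congr 1; ext x; rw [add_comm]
      _ = R1 * Real.log 2 := by rw [h1, h2, h3]
  simp only [div_eq_mul_inv]
  rw [intervalIntegral.integral_sub (hint1.const_mul T) intervalIntegrable_const,
    intervalIntegral.integral_const_mul, hinv, intervalIntegral.integral_const]
  simp

lemma core (R1 R2 l1 l2 : ℝ) (hR1 : 0 < R1) (hR2 : 0 < R2) (hl1 : 0 < l1) (hl2 : 0 < l2)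
    (h1 : l1 * ((2:ℝ)^R1 - 1) ≤ 1) (h2 : l2 * (2:ℝ)^(R1+R2) ≤ 1) :
    ENNReal.ofReal ((l1*(1 - l1*((2:ℝ)^R1 - 1))) * (l2*(1 - l2*(2:ℝ)^(R1+R2)))
        * ((2:ℝ)^(R1+R2)*(R1*Real.log 2) - ((2:ℝ)^R1 - 1)))
      ≤ ((expMeasure l1).prod (expMeasure l2)) (oSet R1 R2)
    ∧ ((expMeasure l1).prod (expMeasure l2)) (oSet R1 R2)
      ≤ ENNReal.ofReal (l1 * l2 * ((2:ℝ)^(R1+R2)*(R1*Real.log 2) - ((2:ℝ)^R1 - 1))) := by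
  have hprob : IsProbabilityMeasure (expMeasure l2) := isProbabilityMeasure_expMeasure hl2
  set m := (2:ℝ)^R1 - 1 with hmdef
  set T := (2:ℝ)^(R1+R2) with hTdef
  set G := T*(R1*Real.log 2) - m with hGdef
  have hm0 : 0 < m := by
    have : (1:ℝ) < (2:ℝ)^R1 := Real.one_lt_rpow_iff_of_pos two_pos |>.2 (Or.inl ⟨one_lt_two, hR1⟩)
    simp only [hmdef]; linarith
  have hmT : m + 1 ≤ T := by
    have : (2:ℝ)^R1 ≤ (2:ℝ)^(R1+R2) := Real.rpow_le_rpow_of_exponent_le one_le_two (by linarith)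
    simp only [hmdef, hTdef]; linarith
  have hT0 : (0:ℝ) < T := Real.rpow_pos_of_pos two_pos _
  set g : ℝ → ℝ := fun x => T/(1+x) - 1 with hgdef
  -- bounds for g on Ico 0 m
  have hgpos : ∀ x ∈ Ico 0 m, 0 ≤ g x := by
    intro x hx
    have h1x : (0:ℝ) < 1 + x := by linarith [hx.1]
    have : (1:ℝ) < T/(1+x) := (one_lt_div h1x).2 (by linarith [hx.2])
    simp only [hgdef]; linarith
  have hgleT : ∀ x ∈ Ico 0 m, g x ≤ T := by
    intro x hx
    have h1x : (1:ℝ) ≤ 1 + x := by linarith [hx.1]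
    have := div_le_self hT0.le h1x
    simp only [hgdef]; linarith
  -- the representation
  set F : ℝ → ℝ≥0∞ := fun x => expMeasure l2 (Prod.mk x ⁻¹' oSet R1 R2) with hFdef
  have hS : MeasurableSet (oSet R1 R2) := oSet_meas
  have hF : Measurable F := measurable_measure_prodMk_left hS
  have hpdf : Measurable (exponentialPDF l1) := (measurable_exponentialPDFReal l1).ennreal_ofReal
  have hrepr : ((expMeasure l1).prod (expMeasure l2)) (oSet R1 R2)
      = ∫⁻ x in Ico 0 m, exponentialPDF l1 x * F x := by
    rw [Measure.prod_apply hS]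
    have hμ : expMeasure l1 = volume.withDensity (exponentialPDF l1) := rfl
    rw [hμ, lintegral_withDensity_eq_lintegral_mul volume hpdf hF]
    rw [← lintegral_add_compl (fun x => (exponentialPDF l1 * F) x) measurableSet_Ico
      (A := Ico 0 m)]
    have hpt : ∀ x ∈ (Ico 0 m)ᶜ, (exponentialPDF l1 * F) x = (fun _ => (0:ℝ≥0∞)) x := by
      intro x hx
      simp only [mem_compl_iff, mem_Ico, not_and, not_lt] at hx
      rcases lt_or_ge x 0 with hneg | h0
      · show exponentialPDF l1 x * F x = 0
        rw [exponentialPDF_of_neg hneg, zero_mul]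
      · show exponentialPDF l1 x * F x = 0
        have : Prod.mk x ⁻¹' (oSet R1 R2) = ∅ := slice_empty hR1 (hx h0)
        simp only [hFdef, this, measure_empty, mul_zero]
    have hzero : ∫⁻ x in (Ico 0 m)ᶜ, (exponentialPDF l1 * F) x = 0 := by
      rw [setLIntegral_congr_fun measurableSet_Ico.compl hpt, lintegral_zero]
    rw [hzero, add_zero]
    rfl
  -- pointwise slice value
  have hslice : ∀ x ∈ Ico 0 m, F x = expMeasure l2 (Ico 0 (g x)) := by
    intro x hx
    simp only [hFdef]
    rw [expMeasure_eq_inter_Ici l2 (measurable_prodMk_left hS), slice_inter hR1 hR2 hx]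
  -- continuity helper
  have hneIcc : ∀ x ∈ Icc 0 m, (1:ℝ) + x ≠ 0 := fun x hx h => by linarith [hx.1]
  have hgcont : ContinuousOn g (Icc 0 m) :=
    (continuousOn_const.div (by fun_prop) hneIcc).sub continuousOn_const
  constructor
  · -- lower bound
    set c1 := 1 - l1*m with hc1
    set c2 := 1 - l2*T with hc2
    have hc10 : 0 ≤ c1 := by simp only [hc1]; linarith
    have hc20 : 0 ≤ c2 := by simp only [hc2]; linarith
    rw [hrepr]
    have hmono : ∫⁻ x in Ico 0 m, ENNReal.ofReal ((l1*c1*(l2*c2)) * g x)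
        ≤ ∫⁻ x in Ico 0 m, exponentialPDF l1 x * F x := by
      refine setLIntegral_mono (hpdf.mul hF) fun x hx => ?_
      rw [hslice x hx]
      have e1 : ENNReal.ofReal ((l1*c1*(l2*c2)) * g x)
          = ENNReal.ofReal (l1*c1) * ENNReal.ofReal (l2*c2* g x) := by
        rw [← ENNReal.ofReal_mul (by positivity)]; ring_nf
      rw [e1]
      refine mul_le_mul' ?_ ?_
      · rw [exponentialPDF_of_nonneg hx.1]
        refine ENNReal.ofReal_le_ofReal ?_
        have hexp : -(l1*x) + 1 ≤ Real.exp (-(l1*x)) := Real.add_one_le_exp _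
        have : c1 ≤ Real.exp (-(l1*x)) := by
          simp only [hc1]; nlinarith [hx.1, hx.2.le, hl1.le]
        nlinarith [hl1.le]
      · exact le_expMeasure_Ico hl2 (hgpos x hx) hc20
          (by have := hgleT x hx; simp only [hc2]; nlinarith [hl2.le])
    refine le_trans (le_of_eq ?_) hmono
    rw [lint_ofReal hm0 (fun x => (l1*c1*(l2*c2)) * g x)
      (continuousOn_const.mul hgcont)
      (fun x hx => mul_nonneg (by positivity) (hgpos x hx))]
    rw [intervalIntegral.integral_const_mul, intG R1 R2 hR1]
  · -- upper bound
    rw [hrepr]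
    have hgmeas : Measurable g :=
      (measurable_const.div (measurable_const.add measurable_id)).sub measurable_const
    have hmono : ∫⁻ x in Ico 0 m, exponentialPDF l1 x * F x
        ≤ ∫⁻ x in Ico 0 m, ENNReal.ofReal (l1 * l2 * g x) := by
      refine setLIntegral_mono ((hgmeas.const_mul (l1*l2)).ennreal_ofReal) fun x hx => ?_
      rw [hslice x hx, exponentialPDF_of_nonneg hx.1]
      calc ENNReal.ofReal (l1 * Real.exp (-(l1*x))) * expMeasure l2 (Ico 0 (g x))
          ≤ ENNReal.ofReal l1 * ENNReal.ofReal (l2 * g x) := by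
            refine mul_le_mul' (ENNReal.ofReal_le_ofReal ?_) (expMeasure_Ico_le hl2 (hgpos x hx))
            nlinarith [Real.exp_le_one_iff.2 (by nlinarith [hx.1, hl1.le] : -(l1*x) ≤ 0),
              Real.exp_pos (-(l1*x)), hl1.le]
        _ = ENNReal.ofReal (l1 * l2 * g x) := by
            rw [← ENNReal.ofReal_mul hl1.le]; ring_nf
    refine le_trans hmono (le_of_eq ?_)
    rw [lint_ofReal hm0 (fun x => l1 * l2 * g x)
      (continuousOn_const.mul hgcont)
      (fun x hx => mul_nonneg (by positivity) (hgpos x hx))]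
    rw [intervalIntegral.integral_const_mul, intG R1 R2 hR1]

set_option maxHeartbeats 1600000 in
/-- With `P₁ = a·t`, `P₂ = b·t`, as `t → ∞`,
`t²·P_out,2 → (2^{R₁+R₂}·R₁·ln 2 − (2^{R₁} − 1))·σ⁴/(a·b)`; equivalently
`P_out,2 ≃ (2^{R₁+R₂}·R₁·ln 2 − (2^{R₁}−1))·σ⁴/(P₁·P₂)` in the high-SNR limit. -/
theorem outage_K2_highSNR
    (σ2 R1 R2 a b : ℝ) (hσ : 0 < σ2) (hR1 : 0 < R1) (hR2 : 0 < R2)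
    (ha : 0 < a) (hb : 0 < b) :
    Filter.Tendsto (fun t : ℝ => t ^ 2 * poutTwo σ2 (a * t) (b * t) R1 R2)
      Filter.atTop
      (nhds (((2:ℝ) ^ (R1 + R2) * R1 * Real.log 2 - ((2:ℝ) ^ R1 - 1))
        * σ2 ^ 2 / (a * b))) := by
  set m := (2:ℝ)^R1 - 1 with hmdef
  set T := (2:ℝ)^(R1+R2) with hTdef
  set G := T*(R1*Real.log 2) - m with hGdef
  have hm0 : 0 < m := by
    have : (1:ℝ) < (2:ℝ)^R1 := Real.one_lt_rpow_iff_of_pos two_pos |>.2 (Or.inl ⟨one_lt_two, hR1⟩)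
    simp only [hmdef]; linarith
  have hT0 : (0:ℝ) < T := Real.rpow_pos_of_pos two_pos _
  have hmT : m + 1 ≤ T := by
    have : (2:ℝ)^R1 ≤ (2:ℝ)^(R1+R2) := Real.rpow_le_rpow_of_exponent_le one_le_two (by linarith)
    simp only [hmdef, hTdef]; linarith
  have hG0 : 0 ≤ G := by
    have hlog : R1 * Real.log 2 = Real.log (m+1) := by
      rw [show m + 1 = (2:ℝ)^R1 by simp [hmdef], Real.log_rpow two_pos]
    have h1 : Real.log (1/(m+1)) ≤ 1/(m+1) - 1 := Real.log_le_sub_one_of_pos (by positivity)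
    rw [Real.log_div one_ne_zero (by linarith), Real.log_one] at h1
    have hlb : 1 - 1/(m+1) ≤ Real.log (m+1) := by linarith
    have : (m+1) * Real.log (m+1) ≥ m := by
      have h2 : (m+1) * (1 - 1/(m+1)) = m := by field_simp; ring
      have h3 := mul_le_mul_of_nonneg_left hlb (by linarith : (0:ℝ) ≤ m+1)
      rw [h2] at h3
      linarith
    have hTm : T * (R1 * Real.log 2) ≥ (m+1) * Real.log (m+1) := by
      rw [hlog]
      have hlogpos : 0 ≤ Real.log (m+1) := Real.log_nonneg (by linarith)
      nlinarith
    simp only [hGdef]; linarith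
  set C := G * σ2^2/(a*b) with hCdef
  set k1 := σ2*m/a with hk1
  set k2 := σ2*T/b with hk2
  set Lo : ℝ → ℝ := fun t => C * ((1 - k1*t⁻¹) * (1 - k2*t⁻¹)) with hLodef
  have hLo : Tendsto Lo atTop (nhds (C * ((1 - k1*0) * (1 - k2*0)))) := by
    exact Tendsto.const_mul C ((tendsto_const_nhds.sub
      (tendsto_inv_atTop_zero.const_mul k1)).mul (tendsto_const_nhds.sub
      (tendsto_inv_atTop_zero.const_mul k2)))
  have htarget : ((2:ℝ) ^ (R1 + R2) * R1 * Real.log 2 - ((2:ℝ) ^ R1 - 1)) * σ2 ^ 2 / (a * b)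
      = C * ((1 - k1*0) * (1 - k2*0)) := by
    simp only [hCdef, hGdef, hTdef, hmdef]; ring
  rw [htarget]
  refine tendsto_of_tendsto_of_tendsto_of_le_of_le' hLo tendsto_const_nhds ?_ ?_
  · -- lower: eventually Lo t ≤ t^2 * poutTwo
    filter_upwards [eventually_ge_atTop (max 1 (max (σ2*m/a) (σ2*T/b)))] with t ht
    have ht1 : (1:ℝ) ≤ t := le_trans (le_max_left _ _) ht
    have htpos : 0 < t := by linarith
    have hl1 : 0 < σ2/(a*t) := by positivity
    have hl2 : 0 < σ2/(b*t) := by positivity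
    have h1 : (σ2/(a*t)) * m ≤ 1 := by
      rw [div_mul_eq_mul_div, div_le_one (by positivity)]
      have : σ2*m/a ≤ t := le_trans (le_trans (le_max_left _ _) (le_max_right _ _)) ht
      calc σ2 * m = a * (σ2*m/a) := by field_simp
        _ ≤ a * t := by nlinarith
    have h2 : (σ2/(b*t)) * T ≤ 1 := by
      rw [div_mul_eq_mul_div, div_le_one (by positivity)]
      have : σ2*T/b ≤ t := le_trans (le_trans (le_max_right _ _) (le_max_right _ _)) ht
      calc σ2 * T = b * (σ2*T/b) := by field_simp
        _ ≤ b * t := by nlinarith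
    obtain ⟨hlo, hup⟩ := core R1 R2 (σ2/(a*t)) (σ2/(b*t)) hR1 hR2 hl1 hl2 h1 h2
    have hPne : ((expMeasure (σ2/(a*t))).prod (expMeasure (σ2/(b*t)))) (oSet R1 R2) ≠ ⊤ :=
      ne_top_of_le_ne_top ENNReal.ofReal_ne_top hup
    have hpout : poutTwo σ2 (a*t) (b*t) R1 R2
        = (((expMeasure (σ2/(a*t))).prod (expMeasure (σ2/(b*t)))) (oSet R1 R2)).toReal := rfl
    have hlo' : (σ2/(a*t)*(1 - σ2/(a*t)*m)) * (σ2/(b*t)*(1 - σ2/(b*t)*T)) * G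
        ≤ poutTwo σ2 (a*t) (b*t) R1 R2 := by
      rw [hpout]
      have := ENNReal.toReal_mono hPne hlo
      rwa [ENNReal.toReal_ofReal (by
        have e1 : 0 ≤ 1 - σ2/(a*t)*m := by linarith
        have e2 : 0 ≤ 1 - σ2/(b*t)*T := by linarith
        positivity)] at this
    have hkey : Lo t = t^2 * ((σ2/(a*t)*(1 - σ2/(a*t)*m)) * (σ2/(b*t)*(1 - σ2/(b*t)*T)) * G) := by
      simp only [hLodef, hCdef, hk1, hk2]
      field_simp
    rw [hkey]
    have := mul_le_mul_of_nonneg_left hlo' (by positivity : (0:ℝ) ≤ t^2)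
    exact this
  · -- upper
    filter_upwards [eventually_ge_atTop (max 1 (max (σ2*m/a) (σ2*T/b)))] with t ht
    have ht1 : (1:ℝ) ≤ t := le_trans (le_max_left _ _) ht
    have htpos : 0 < t := by linarith
    have hl1 : 0 < σ2/(a*t) := by positivity
    have hl2 : 0 < σ2/(b*t) := by positivity
    have h1 : (σ2/(a*t)) * m ≤ 1 := by
      rw [div_mul_eq_mul_div, div_le_one (by positivity)]
      have : σ2*m/a ≤ t := le_trans (le_trans (le_max_left _ _) (le_max_right _ _)) ht
      calc σ2 * m = a * (σ2*m/a) := by field_simp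
        _ ≤ a * t := by nlinarith
    have h2 : (σ2/(b*t)) * T ≤ 1 := by
      rw [div_mul_eq_mul_div, div_le_one (by positivity)]
      have : σ2*T/b ≤ t := le_trans (le_trans (le_max_right _ _) (le_max_right _ _)) ht
      calc σ2 * T = b * (σ2*T/b) := by field_simp
        _ ≤ b * t := by nlinarith
    obtain ⟨hlo, hup⟩ := core R1 R2 (σ2/(a*t)) (σ2/(b*t)) hR1 hR2 hl1 hl2 h1 h2
    have hpout : poutTwo σ2 (a*t) (b*t) R1 R2
        = (((expMeasure (σ2/(a*t))).prod (expMeasure (σ2/(b*t)))) (oSet R1 R2)).toReal := rfl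
    have hup' : poutTwo σ2 (a*t) (b*t) R1 R2 ≤ σ2/(a*t) * (σ2/(b*t)) * G := by
      rw [hpout]
      calc (((expMeasure (σ2/(a*t))).prod (expMeasure (σ2/(b*t)))) (oSet R1 R2)).toReal
          ≤ (ENNReal.ofReal (σ2/(a*t) * (σ2/(b*t)) * G)).toReal :=
            ENNReal.toReal_mono ENNReal.ofReal_ne_top hup
        _ = σ2/(a*t) * (σ2/(b*t)) * G := ENNReal.toReal_ofReal (by positivity)
    have hkey : t^2 * (σ2/(a*t) * (σ2/(b*t)) * G) = C := by
      simp only [hCdef]; field_simp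
    calc t^2 * poutTwo σ2 (a*t) (b*t) R1 R2 ≤ t^2 * (σ2/(a*t) * (σ2/(b*t)) * G) :=
          mul_le_mul_of_nonneg_left hup' (by positivity)
      _ = C := hkey
      _ = C * ((1 - k1*0) * (1 - k2*0)) := by ring
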